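/- Let H₀ be a real Hilbert space, let V₀ ⊆ V₁ ⊆ V₂ ⊆ ⋯ be an increasing sequence of closed subspaces with orthogonal projections P_ℓ : H₀ → V_ℓ, set P_{-1} := 0, and let θ > 1. Let u ∈ H₀ lie in the closure of ⋃_{ℓ≥0} V_ℓ. Then, as an inequality in [0,∞], θ^{-1} ∑_{ℓ=0}^{∞} θ^{ℓ} ‖(P_ℓ − P_{ℓ-1}) u‖² ≤ ∑_{ℓ=0}^{∞} θ^{ℓ} ‖u − P_ℓ u‖² + ‖P₀ u‖² ≤ (1 + (θ−1)^{-1}) ∑_{ℓ=0}^{∞} θ^{ℓ} ‖(P_ℓ − P_{ℓ-1}) u‖². -/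

import Mathlib

open RealInnerProductSpace
open scoped ENNReal
set_option maxHeartbeats 1000000

/-- Abstract two-sided norm equivalence behind Corollary 6.4 ('Norm
equivalence II'): for nested closed subspaces `V ℓ` of a Hilbert space with
orthogonal projections `P ℓ` (and `P₋₁ := 0`), any `u` in the closure of
`⋃ V ℓ` satisfies, with `θ > 1`,
`θ⁻¹ ∑ θ^ℓ ‖(Pℓ − Pℓ₋₁)u‖² ≤ ∑ θ^ℓ ‖u − Pℓ u‖² + ‖P₀ u‖²
  ≤ (1 + (θ−1)⁻¹) ∑ θ^ℓ ‖(Pℓ − Pℓ₋₁)u‖²` in `[0,∞]`. -/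
theorem stmt_11 {H : Type*} [NormedAddCommGroup H] [InnerProductSpace ℝ H]
    [CompleteSpace H]
    (V : ℕ → Submodule ℝ H) (hclosed : ∀ ℓ, IsClosed (V ℓ : Set H))
    (hnested : ∀ ℓ, V ℓ ≤ V (ℓ + 1))
    (P : ℕ → H → H)
    (hproj : ∀ ℓ u, P ℓ u ∈ V ℓ ∧ ∀ w ∈ V ℓ, ⟪u - P ℓ u, w⟫ = 0)
    (θ : ℝ) (hθ : 1 < θ)
    (u : H) (hu : u ∈ closure (⋃ ℓ, (V ℓ : Set H))) :
    ENNReal.ofReal θ⁻¹ *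
        (∑' ℓ : ℕ, ENNReal.ofReal θ ^ ℓ *
          ENNReal.ofReal (‖P ℓ u - (if ℓ = 0 then 0 else P (ℓ - 1) u)‖ ^ 2))
      ≤ (∑' ℓ : ℕ, ENNReal.ofReal θ ^ ℓ * ENNReal.ofReal (‖u - P ℓ u‖ ^ 2))
          + ENNReal.ofReal (‖P 0 u‖ ^ 2) ∧
    (∑' ℓ : ℕ, ENNReal.ofReal θ ^ ℓ * ENNReal.ofReal (‖u - P ℓ u‖ ^ 2))
        + ENNReal.ofReal (‖P 0 u‖ ^ 2)
      ≤ ENNReal.ofReal (1 + (θ - 1)⁻¹) *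
          ∑' ℓ : ℕ, ENNReal.ofReal θ ^ ℓ *
            ENNReal.ofReal (‖P ℓ u - (if ℓ = 0 then 0 else P (ℓ - 1) u)‖ ^ 2) := by
  have hθ0 : (0:ℝ) < θ := lt_trans one_pos hθ
  have hVmono : Monotone V := monotone_nat_of_le_succ hnested
  have hmem : ∀ ℓ, P ℓ u ∈ V ℓ := fun ℓ => (hproj ℓ u).1
  have horth : ∀ ℓ, ∀ w ∈ V ℓ, ⟪u - P ℓ u, w⟫ = 0 := fun ℓ => (hproj ℓ u).2
  set d : ℕ → H := fun ℓ => P ℓ u - (if ℓ = 0 then 0 else P (ℓ-1) u) with hd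
  have hd0 : d 0 = P 0 u := by simp [hd]
  have hdsucc : ∀ ℓ, d (ℓ+1) = P (ℓ+1) u - P ℓ u := by intro ℓ; simp [hd]
  have hdmem : ∀ ℓ, d ℓ ∈ V ℓ := by
    intro ℓ
    cases ℓ with
    | zero => rw [hd0]; exact hmem 0
    | succ n => rw [hdsucc]; exact sub_mem (hmem _) (hVmono (Nat.le_succ n) (hmem n))
  have pyth : ∀ ℓ, ∀ v ∈ V ℓ, ‖u - v‖^2 = ‖u - P ℓ u‖^2 + ‖P ℓ u - v‖^2 := by
    intro ℓ v hv
    have h1 : u - v = (u - P ℓ u) + (P ℓ u - v) := by abel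
    have h2 : ⟪u - P ℓ u, P ℓ u - v⟫ = 0 := horth ℓ _ (sub_mem (hmem ℓ) hv)
    rw [h1, norm_add_sq_real, h2]; ring
  have best : ∀ ℓ, ∀ v ∈ V ℓ, ‖u - P ℓ u‖ ≤ ‖u - v‖ := by
    intro ℓ v hv
    have h := pyth ℓ v hv
    nlinarith [norm_nonneg (u - P ℓ u), norm_nonneg (u - v), sq_nonneg ‖P ℓ u - v‖]
  have htendsto : Filter.Tendsto (fun m => P m u) Filter.atTop (nhds u) := by
    rw [Metric.tendsto_atTop]
    intro ε hε
    obtain ⟨v, hvmem, hvd⟩ := Metric.mem_closure_iff.mp hu ε hε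
    obtain ⟨k, hvk⟩ := Set.mem_iUnion.mp hvmem
    refine ⟨k, fun m hm => ?_⟩
    calc dist (P m u) u = ‖u - P m u‖ := by rw [dist_comm, dist_eq_norm]
    _ ≤ ‖u - v‖ := best m v (hVmono hm hvk)
    _ < ε := by rw [← dist_eq_norm]; exact hvd
  have hdorth : ∀ j k, j < k → ⟪d j, d k⟫ = 0 := by
    intro j k hjk
    obtain ⟨n, rfl⟩ : ∃ n, k = n + 1 := ⟨k-1, by omega⟩
    have h1 : d (n+1) = (u - P n u) - (u - P (n+1) u) := by rw [hdsucc]; abel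
    have hj_n : (d j : H) ∈ V n := hVmono (by omega) (hdmem j)
    have hj_n1 : (d j : H) ∈ V (n+1) := hVmono (by omega) (hdmem j)
    rw [h1, inner_sub_right]
    have e1 : ⟪d j, u - P n u⟫ = 0 := by rw [real_inner_comm]; exact horth n _ hj_n
    have e2 : ⟪d j, u - P (n+1) u⟫ = 0 := by rw [real_inner_comm]; exact horth (n+1) _ hj_n1
    rw [e1, e2, sub_zero]
  have hnorm_sum : ∀ s : Finset ℕ, ‖∑ i ∈ s, d i‖^2 = ∑ i ∈ s, ‖d i‖^2 := by
    intro s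
    rw [← real_inner_self_eq_norm_sq, sum_inner]
    refine Finset.sum_congr rfl fun i hi => ?_
    rw [inner_sum, Finset.sum_eq_single i (fun j _ hne => ?_) (fun h => absurd hi h)]
    · exact real_inner_self_eq_norm_sq _
    · rcases lt_or_gt_of_ne hne with h | h
      · rw [real_inner_comm]; exact hdorth j i h
      · exact hdorth i j h
  have hsum_range : ∀ m, ∑ i ∈ Finset.range (m+1), d i = P m u := by
    intro m
    induction m with
    | zero => simp [hd0]
    | succ n ih => rw [Finset.sum_range_succ, ih, hdsucc]; abel
  have hhs : ∀ ℓ, HasSum (fun j => ‖d (ℓ+1+j)‖^2) (‖u - P ℓ u‖^2) := by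
    intro ℓ
    rw [hasSum_iff_tendsto_nat_of_nonneg (fun j => sq_nonneg _)]
    have key : ∀ n, ∑ j ∈ Finset.range n, ‖d (ℓ+1+j)‖^2 = ‖P (ℓ+n) u - P ℓ u‖^2 := by
      intro n
      have h1 : ∑ i ∈ Finset.Ico (ℓ+1) (ℓ+n+1), ‖d i‖^2
          = ∑ j ∈ Finset.range n, ‖d (ℓ+1+j)‖^2 := by
        rw [Finset.sum_Ico_eq_sum_range]
        simp only [show ℓ+n+1 - (ℓ+1) = n from by omega]
      have h2 : ∑ i ∈ Finset.Ico (ℓ+1) (ℓ+n+1), d i = P (ℓ+n) u - P ℓ u := by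
        rw [Finset.sum_Ico_eq_sub _ (by omega), hsum_range, hsum_range]
      rw [← h1, ← hnorm_sum, h2]
    simp only [key]
    have hcomp : Filter.Tendsto (fun n => ℓ + n) Filter.atTop Filter.atTop :=
      Filter.tendsto_atTop_mono (fun n => Nat.le_add_left n ℓ) Filter.tendsto_id
    have := ((htendsto.comp hcomp).sub (tendsto_const_nhds (x := P ℓ u))).norm.pow 2
    simpa using this
  set T := ENNReal.ofReal θ with hT
  have hTne0 : T ≠ 0 := by
    simp [hT, ENNReal.ofReal_eq_zero, not_le, hθ0]
  have hTnetop : T ≠ ⊤ := ENNReal.ofReal_ne_top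
  have hT1 : 1 ≤ T := by
    rw [hT, ← ENNReal.ofReal_one]
    exact ENNReal.ofReal_le_ofReal hθ.le
  set b : ℕ → ℝ≥0∞ := fun k => ENNReal.ofReal (‖d k‖^2) with hb
  set a : ℕ → ℝ≥0∞ := fun ℓ => ENNReal.ofReal (‖u - P ℓ u‖^2) with ha
  have a_eq : ∀ ℓ, a ℓ = ∑' j, b (ℓ+1+j) := by
    intro ℓ
    show ENNReal.ofReal (‖u - P ℓ u‖^2) = ∑' j, ENNReal.ofReal (‖d (ℓ+1+j)‖^2)
    rw [← (hhs ℓ).tsum_eq,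
      ENNReal.ofReal_tsum_of_nonneg (fun j => sq_nonneg _) (hhs ℓ).summable]
  constructor
  · -- lower bound
    have hble : ∀ ℓ, b (ℓ+1) ≤ a ℓ := by
      intro ℓ
      refine ENNReal.ofReal_le_ofReal ?_
      have h := pyth (ℓ+1) (P ℓ u) (hnested ℓ (hmem ℓ))
      rw [hdsucc]
      nlinarith [sq_nonneg ‖u - P (ℓ+1) u‖]
    have hsplit : ∑' ℓ, T^ℓ * b ℓ = T^0 * b 0 + ∑' ℓ, T^(ℓ+1) * b (ℓ+1) :=
      tsum_eq_zero_add' (f := fun ℓ => T^ℓ * b ℓ) ENNReal.summable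
    have hstep : ∑' ℓ, T^(ℓ+1) * b (ℓ+1) ≤ T * ∑' ℓ, T^ℓ * a ℓ := by
      rw [← ENNReal.tsum_mul_left]
      refine ENNReal.tsum_le_tsum fun ℓ => ?_
      rw [pow_succ, mul_comm (T^ℓ) T, mul_assoc]
      exact mul_le_mul_right (mul_le_mul_right (hble ℓ) _) _
    have hb0 : T^0 * b 0 ≤ T * ENNReal.ofReal (‖P 0 u‖^2) := by
      simp only [pow_zero, one_mul, hb]
      rw [hd0]
      exact le_mul_of_one_le_left (zero_le) hT1
    have htot : ∑' ℓ, T^ℓ * b ℓ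
        ≤ T * ((∑' ℓ, T^ℓ * a ℓ) + ENNReal.ofReal (‖P 0 u‖^2)) := by
      rw [hsplit, mul_add]
      exact add_le_add hb0 hstep |>.trans (le_of_eq (add_comm _ _))
    calc ENNReal.ofReal θ⁻¹ * ∑' ℓ, T^ℓ * b ℓ
        = T⁻¹ * ∑' ℓ, T^ℓ * b ℓ := by rw [ENNReal.ofReal_inv_of_pos hθ0]
      _ ≤ T⁻¹ * (T * ((∑' ℓ, T^ℓ * a ℓ) + ENNReal.ofReal (‖P 0 u‖^2))) :=
          mul_le_mul_right htot _
      _ = (∑' ℓ, T^ℓ * a ℓ) + ENNReal.ofReal (‖P 0 u‖^2) := by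
          rw [← mul_assoc, ENNReal.inv_mul_cancel hTne0 hTnetop, one_mul]
  · -- upper bound
    set S := ∑' k, T^k * b k with hS
    have hstep : ∀ j : ℕ, ∑' ℓ, T^ℓ * b (ℓ+1+j) ≤ (T⁻¹)^(j+1) * S := by
      intro j
      have cancel : (T⁻¹)^(j+1) * T^(j+1) = 1 := by
        rw [← mul_pow, ENNReal.inv_mul_cancel hTne0 hTnetop, one_pow]
      have hre : ∀ ℓ : ℕ, T^ℓ * b (ℓ+1+j) = (T⁻¹)^(j+1) * (T^(ℓ+1+j) * b (ℓ+1+j)) := by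
        intro ℓ
        have hpa : T^((j+1)+ℓ) = T^(j+1) * T^ℓ := pow_add T (j+1) ℓ
        rw [show ℓ+1+j = (j+1)+ℓ from by omega, hpa, ← mul_assoc, ← mul_assoc,
          cancel, one_mul]
      calc ∑' ℓ, T^ℓ * b (ℓ+1+j)
          = (T⁻¹)^(j+1) * ∑' ℓ, T^(ℓ+1+j) * b (ℓ+1+j) := by
            simp_rw [hre]; rw [ENNReal.tsum_mul_left]
        _ ≤ (T⁻¹)^(j+1) * S := by
            refine mul_le_mul_right ?_ _
            exact ENNReal.tsum_comp_le_tsum_of_injective (f := fun ℓ : ℕ => ℓ+1+j)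
              (fun x y h => by simp only [] at h; omega) (fun k => T^k * b k)
    have hgeo : ∑' j : ℕ, (T⁻¹)^(j+1) = ENNReal.ofReal (θ-1)⁻¹ := by
      have h1 : ∑' j : ℕ, (T⁻¹)^(j+1) = T⁻¹ * (1 - T⁻¹)⁻¹ := by
        simp_rw [pow_succ, mul_comm]
        rw [ENNReal.tsum_mul_left, ENNReal.tsum_geometric]
      have hTinv : T⁻¹ = ENNReal.ofReal θ⁻¹ := (ENNReal.ofReal_inv_of_pos hθ0).symm
      have hθinv1 : (0:ℝ) < 1 - θ⁻¹ := by
        have : θ⁻¹ < 1 := inv_lt_one_of_one_lt₀ hθ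
        linarith
      rw [h1, hTinv, ← ENNReal.ofReal_one, ← ENNReal.ofReal_sub _ (by positivity),
        ← ENNReal.ofReal_inv_of_pos hθinv1, ← ENNReal.ofReal_mul (by positivity)]
      congr 1
      rw [← mul_inv]
      congr 1
      field_simp
    have hA : ∑' ℓ, T^ℓ * a ℓ ≤ ENNReal.ofReal (θ-1)⁻¹ * S := by
      calc ∑' ℓ, T^ℓ * a ℓ = ∑' ℓ, ∑' j, T^ℓ * b (ℓ+1+j) := by
            simp_rw [a_eq, ENNReal.tsum_mul_left]
        _ = ∑' j, ∑' ℓ, T^ℓ * b (ℓ+1+j) := ENNReal.tsum_comm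
        _ ≤ ∑' j : ℕ, (T⁻¹)^(j+1) * S := ENNReal.tsum_le_tsum hstep
        _ = (∑' j : ℕ, (T⁻¹)^(j+1)) * S := ENNReal.tsum_mul_right
        _ = ENNReal.ofReal (θ-1)⁻¹ * S := by rw [hgeo]
    have hb0 : ENNReal.ofReal (‖P 0 u‖^2) ≤ S := by
      have := ENNReal.le_tsum (f := fun k => T^k * b k) 0
      simpa [hb, hd0, hS] using this
    calc (∑' ℓ, T^ℓ * a ℓ) + ENNReal.ofReal (‖P 0 u‖^2)
        ≤ ENNReal.ofReal (θ-1)⁻¹ * S + 1 * S := by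
          rw [one_mul]; exact add_le_add hA hb0
      _ = (ENNReal.ofReal (θ-1)⁻¹ + 1) * S := by rw [add_mul]
      _ = ENNReal.ofReal (1 + (θ-1)⁻¹) * S := by
          rw [← ENNReal.ofReal_one, ← ENNReal.ofReal_add (inv_nonneg.mpr (by linarith)) (by norm_num),
            add_comm ((θ-1)⁻¹) 1]
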